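/- arXiv:1612.01665 — 2 statements merged into one kernel-verified Lean document; each statement's English description precedes it below -/
import Mathlib

section
/- Let i_1 ≥ 1 and i_2, …, i_s ≥ 0 be integers. Then ν_2(i_1) + κ_2(i_1) + κ_2(i_2) + ⋯ + κ_2(i_s) ≥ ν_2(i_1 + ⋯ + i_s) + 1. -/
private lemma kappa_pos {n : ℕ} (h : 1 ≤ n) : 1 ≤ (Nat.digits 2 n).sum := by
  by_contra hc
  push_neg at hc
  have hs : (Nat.digits 2 n).sum = 0 := by omega
  have hall : ∀ x ∈ Nat.digits 2 n, x = 0 := by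
    intro x hx
    exact List.sum_eq_zero_iff.mp hs x hx
  have hne : Nat.digits 2 n ≠ [] := Nat.digits_ne_nil_iff_ne_zero.mpr (by omega)
  have := Nat.getLast_digit_ne_zero 2 (m := n) (by omega)
  exact this (hall _ (List.getLast_mem hne))

private lemma kappa_subadd (a b : ℕ) :
    (Nat.digits 2 (a + b)).sum ≤ (Nat.digits 2 a).sum + (Nat.digits 2 b).sum := by
  have hp : Fact (Nat.Prime 2) := ⟨Nat.prime_two⟩
  have h1 := sub_one_mul_padicValNat_factorial (p := 2) a
  have h2 := sub_one_mul_padicValNat_factorial (p := 2) b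
  have h3 := sub_one_mul_padicValNat_factorial (p := 2) (a + b)
  have hdvd : Nat.factorial a * Nat.factorial b ∣ Nat.factorial (a + b) :=
    Nat.factorial_mul_factorial_dvd_factorial_add a b
  have hle : padicValNat 2 (Nat.factorial a) + padicValNat 2 (Nat.factorial b) ≤
      padicValNat 2 (Nat.factorial (a + b)) := by
    rw [← padicValNat.mul (Nat.factorial_ne_zero a) (Nat.factorial_ne_zero b)]
    have h2dvd : 2 ^ padicValNat 2 (Nat.factorial a * Nat.factorial b) ∣
        Nat.factorial (a + b) := dvd_trans pow_padicValNat_dvd hdvd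
    exact (padicValNat_dvd_iff_le (Nat.factorial_ne_zero _)).mp h2dvd
  have da := Nat.digit_sum_le 2 a
  have db := Nat.digit_sum_le 2 b
  have dab := Nat.digit_sum_le 2 (a + b)
  simp only [show (2:ℕ) - 1 = 1 by rfl, one_mul] at h1 h2 h3
  omega

private lemma kappa_sum (n : ℕ) (f : Fin n → ℕ) :
    (Nat.digits 2 (∑ j, f j)).sum ≤ ∑ j, (Nat.digits 2 (f j)).sum := by
  induction n with
  | zero => simp
  | succ n ih =>
    rw [Fin.sum_univ_succ, Fin.sum_univ_succ]
    calc (Nat.digits 2 (f 0 + ∑ j : Fin n, f j.succ)).sum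
        ≤ (Nat.digits 2 (f 0)).sum + (Nat.digits 2 (∑ j : Fin n, f j.succ)).sum :=
          kappa_subadd _ _
      _ ≤ _ := Nat.add_le_add_left (ih (fun j => f j.succ)) _

private lemma core (a b : ℕ) (ha : 1 ≤ a) :
    padicValNat 2 (a + b) + 1 ≤
      padicValNat 2 a + (Nat.digits 2 a).sum + (Nat.digits 2 b).sum := by
  have hp : Fact (Nat.Prime 2) := ⟨Nat.prime_two⟩
  have hk := sub_one_mul_padicValNat_choose_eq_sub_sum_digits' (p := 2) (k := b) (n := a)
  simp only [show (2:ℕ) - 1 = 1 by rfl, one_mul] at hk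
  obtain ⟨a', rfl⟩ : ∃ a', a = a' + 1 := ⟨a - 1, by omega⟩
  have hid := Nat.add_one_mul_choose_eq (a' + b) a'
  have hrw : a' + b + 1 = a' + 1 + b := by omega
  rw [hrw] at hid
  have hdvd : (a' + 1 + b) ∣ Nat.choose (a' + 1 + b) (a' + 1) * (a' + 1) :=
    ⟨Nat.choose (a' + b) a', hid.symm⟩
  have hchoose_pos : 0 < Nat.choose (a' + 1 + b) (a' + 1) :=
    Nat.choose_pos (by omega)
  have hle : padicValNat 2 (a' + 1 + b) ≤
      padicValNat 2 (Nat.choose (a' + 1 + b) (a' + 1)) + padicValNat 2 (a' + 1) := by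
    rw [← padicValNat.mul (by omega) (by omega)]
    have : 2 ^ padicValNat 2 (a' + 1 + b) ∣ Nat.choose (a' + 1 + b) (a' + 1) * (a' + 1) :=
      dvd_trans pow_padicValNat_dvd hdvd
    exact (padicValNat_dvd_iff_le (by positivity)).mp this
  have hcomm : Nat.choose (a' + 1 + b) (a' + 1) = Nat.choose (a' + 1 + b) b :=
    Nat.choose_symm_add
  rw [hcomm] at hle
  have hκa : 1 ≤ (Nat.digits 2 (a' + 1)).sum := kappa_pos (by omega)
  have hκm : 1 ≤ (Nat.digits 2 (a' + 1 + b)).sum := kappa_pos (by omega)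
  omega

theorem stmt14 (s : ℕ) (i₁ : ℕ) (h : 1 ≤ i₁) (f : Fin s → ℕ) :
    padicValNat 2 (i₁ + ∑ j, f j) + 1 ≤
      padicValNat 2 i₁ + (Nat.digits 2 i₁).sum + ∑ j, (Nat.digits 2 (f j)).sum := by
  have h1 := core i₁ (∑ j, f j) h
  have h2 := kappa_sum s f
  omega
end

section
/- For k ≥ 1, the coefficient C(1) of x^(2k) in g(x)·h(x)^(2k+1) equals (3^k − (−1)^k)/(4·3^k), and its 2-adic valuation is ν_2(C(1)) = ν_2(k). -/
/-- The formal power series of `tanh x` over `ℚ`. -/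
noncomputable def tanhPS : PowerSeries ℚ :=
  PowerSeries.mk fun n =>
    if Odd n then
      2 ^ (n + 1) * (2 ^ (n + 1) - 1) * bernoulli (n + 1) / (Nat.factorial (n + 1))
    else 0

/-- The formal power series `h(x) = x / tanh x = Σ_{n even} 2^n β_n x^n / n!` over `ℚ`. -/
noncomputable def hPS : PowerSeries ℚ :=
  PowerSeries.mk fun n =>
    if Even n then 2 ^ n * bernoulli n / (Nat.factorial n) else 0

open PowerSeries

noncomputable def E2 : PowerSeries ℚ := rescale 2 (exp ℚ)

lemma hPS_eq : hPS = rescale 2 (bernoulliPowerSeries ℚ) + X := by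
  ext n
  rw [hPS, map_add, coeff_mk, coeff_rescale, bernoulliPowerSeries, coeff_mk]
  rcases n with _ | _ | n
  · norm_num [bernoulli_zero]
  · norm_num [bernoulli_one, coeff_one_X]
  · rw [coeff_X, if_neg (by omega : ¬ (n + 1 + 1 = 1)), add_zero]
    rcases Nat.even_or_odd (n+2) with he | ho
    · rw [if_pos (by simpa using he)]
      simp only [Algebra.algebraMap_self, RingHom.id_apply]
      ring
    · rw [if_neg (by simpa using ho),
        bernoulli_eq_bernoulli'_of_ne_one (by omega),
        bernoulli'_eq_zero_of_odd (by simpa using ho) (by omega)]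
      simp

lemma hE : hPS * (E2 - 1) = X * (E2 + 1) := by
  have h0 := congrArg (rescale (2:ℚ)) (bernoulliPowerSeries_mul_exp_sub_one ℚ)
  rw [map_mul, map_sub, map_one, rescale_X] at h0
  have hC : (C (R := ℚ)) 2 = (2 : PowerSeries ℚ) := by
    simp [← map_ofNat (C (R := ℚ)) 2]
  rw [hPS_eq]
  have : rescale 2 (exp ℚ) = E2 := rfl
  rw [this] at h0
  linear_combination h0 + (hC) * X

lemma hT : X * tanhPS = rescale 2 hPS - hPS := by
  ext n
  rw [map_sub, coeff_rescale, hPS, tanhPS, coeff_mk]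
  rcases n with _ | n
  · simp
  · rw [coeff_succ_X_mul, coeff_mk]

    rcases Nat.even_or_odd n with he | ho
    · rw [if_neg (by simpa using he), if_neg (by simp [Nat.even_add_one, Nat.not_odd_iff_even.2 he])]
      ring
    · rw [if_pos ho, if_pos (Nat.even_add_one.2 (by simpa using ho))]
      ring

lemma dE2 : d⁄dX ℚ E2 = 2 * E2 := by
  have h2C : (2 : PowerSeries ℚ) = C (R := ℚ) 2 := by simp [← map_ofNat (C (R := ℚ)) 2]
  ext n
  rw [coeff_derivative, h2C, PowerSeries.coeff_C_mul, E2, coeff_rescale, coeff_rescale,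
    coeff_exp, coeff_exp]
  have h1 : ((n+1).factorial : ℚ) = (n+1) * n.factorial := by
    push_cast [Nat.factorial_succ]; ring
  have h2 : (n.factorial : ℚ) ≠ 0 := by exact_mod_cast n.factorial_ne_zero
  have h3 : ((n:ℚ)+1) ≠ 0 := by positivity
  simp only [Algebra.algebraMap_self, RingHom.id_apply]
  field_simp [h1]
  rw [h1]; ring

lemma hC2 : (C (R := ℚ)) 2 = (2 : PowerSeries ℚ) := by simp [← map_ofNat (C (R := ℚ)) 2]

lemma coeff_E2 (n : ℕ) : coeff (R := ℚ) n E2 = 2^n / n.factorial := by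
  rw [E2, coeff_rescale, coeff_exp]; simp [div_eq_mul_inv]

lemma E2sub_ne : E2 - 1 ≠ 0 := by
  intro h
  have := congrArg (coeff (R := ℚ) 1) h
  rw [map_sub, coeff_E2] at this
  norm_num at this

lemma E2add_ne : E2 + 1 ≠ 0 := by
  intro h
  have := congrArg (coeff (R := ℚ) 0) h
  rw [map_add, coeff_E2] at this
  simp at this

lemma hE2 : rescale 2 hPS * (E2 ^ 2 - 1) = (2 * X) * (E2 ^ 2 + 1) := by
  have h0 := congrArg (rescale (2:ℚ)) hE
  rw [map_mul, map_mul, map_sub, map_add, map_one, rescale_X, hC2] at h0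
  have hsq : rescale 2 E2 = E2 ^ 2 := by
    rw [E2, rescale_rescale, sq, exp_mul_exp_eq_exp_add]
    norm_num
  rw [hsq] at h0
  linear_combination h0

lemma tanh_mul_h : tanhPS * hPS = X := by
  have key : tanhPS * hPS * (X * ((E2+1) * (E2-1)^2)) = X * (X * ((E2+1) * (E2-1)^2)) := by
    linear_combination (hPS*(E2+1)*(E2-1)^2) * hT
      + (2*X*(E2^2+1) - (E2+1)*(hPS*(E2-1) + X*(E2+1))) * hE
      + (hPS*(E2-1)) * hE2
  exact mul_right_cancel₀ (by
    refine mul_ne_zero X_ne_zero (mul_ne_zero E2add_ne (pow_ne_zero _ E2sub_ne))) key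

lemma hODE : X * d⁄dX ℚ hPS = hPS - hPS^2 + X^2 := by
  have h0 := congrArg (d⁄dX ℚ) hE
  rw [Derivation.leibniz, Derivation.leibniz, map_sub, map_add,
    Derivation.map_one_eq_zero, dE2, derivative_X, smul_eq_mul, smul_eq_mul,
    smul_eq_mul, smul_eq_mul] at h0
  have key : (X * d⁄dX ℚ hPS) * (E2-1)^2 = (hPS - hPS^2 + X^2) * (E2-1)^2 := by
    linear_combination (X*(E2-1)) * h0 + (hPS*(E2-1) - (E2-1)*(X+1)) * hE
  exact mul_right_cancel₀ (pow_ne_zero _ E2sub_ne) key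

lemma coeff_h0 : coeff (R := ℚ) 0 hPS = 1 := by
  norm_num [hPS, coeff_mk]

lemma coeff_h_pow (m : ℕ) : coeff (R := ℚ) (2*m) (hPS^(2*m+1)) = 1 := by
  induction m with
  | zero => simpa using coeff_h0
  | succ m ih =>
    have hcast : ((2*m+2 : ℕ) : ℚ⟦X⟧) = C (R := ℚ) (2*(m:ℚ)+2) := by
      rw [← map_natCast (C (R := ℚ)) (2*m+2)]
      push_cast
      ring_nf
    have e1 : X * d⁄dX ℚ (hPS^(2*m+2)) =
        C (R := ℚ) (2*(m:ℚ)+2) * (hPS^(2*m+2) - hPS^(2*m+3) + X^2 * hPS^(2*m+1)) := by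
      rw [Derivation.leibniz_pow, nsmul_eq_mul,
        show 2*m+2-1 = 2*m+1 from rfl, hcast, smul_eq_mul]
      linear_combination (C (R := ℚ) (2*(m:ℚ)+2) * hPS^(2*m+1)) * hODE
    have e2 := congrArg (coeff (R := ℚ) (2*m+2)) e1
    rw [show 2*m+2 = (2*m+1)+1 by omega] at e2
    rw [coeff_succ_X_mul, coeff_derivative, PowerSeries.coeff_C_mul, map_add, map_sub,
      show (2*m+1)+1 = 2*m+2 by omega, coeff_X_pow_mul, ih] at e2
    have key : (2*(m:ℚ)+2) * (coeff (R := ℚ) (2*m+2) (hPS^(2*m+3))) = (2*(m:ℚ)+2) * 1 := by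
      push_cast at e2
      linear_combination e2
    have := mul_left_cancel₀ (show (2*(m:ℚ)+2) ≠ 0 by positivity) key
    rw [show 2*(m+1) = 2*m+2 by omega, show 2*m+2+1 = 2*m+3 by omega, this]

lemma hsq : tanhPS^2 * hPS^2 = X^2 := by
  linear_combination (tanhPS*hPS + X) * tanh_mul_h

lemma g0 (g : PowerSeries ℚ) (hg : g * (3 + tanhPS ^ 2) = tanhPS ^ 2) :
    constantCoeff (R := ℚ) g = 0 := by
  have h0 := congrArg (constantCoeff (R := ℚ)) hg
  have ht0 : constantCoeff (R := ℚ) tanhPS = 0 := by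
    rw [tanhPS, ← coeff_zero_eq_constantCoeff_apply, coeff_mk]
    simp
  rw [map_mul, map_add, map_pow, ht0, map_ofNat] at h0
  simpa using h0

lemma coeff_main (g : PowerSeries ℚ) (hg : g * (3 + tanhPS ^ 2) = tanhPS ^ 2) (k : ℕ) :
    coeff (R := ℚ) (2*k) (g * hPS^(2*k+1)) = (3^k - (-1:ℚ)^k)/(4*3^k) := by
  induction k with
  | zero =>
    rw [show 2*0 = 0 by omega, pow_one, coeff_zero_eq_constantCoeff, map_mul,
      g0 g hg]
    norm_num
  | succ k ih =>
    have e1 : (3 : ℚ⟦X⟧) * (g * hPS^(2*k+3)) =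
        X^2 * hPS^(2*k+1) - X^2 * (g * hPS^(2*k+1)) := by
      linear_combination (hPS^(2*k+3)) * hg - ((g-1)*hPS^(2*k+1)) * hsq
    have h3C : (3 : ℚ⟦X⟧) = C (R := ℚ) 3 := by simp [← map_ofNat (C (R := ℚ)) 3]
    have e2 := congrArg (coeff (R := ℚ) (2*k+2)) e1
    rw [h3C, PowerSeries.coeff_C_mul, map_sub, coeff_X_pow_mul, coeff_X_pow_mul,
      coeff_h_pow, ih] at e2
    have h3 : (3:ℚ)^k ≠ 0 := by positivity
    rw [show 2*(k+1) = 2*k+2 by omega, show 2*k+2+1 = 2*k+3 by omega]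
    have e3 : coeff (R := ℚ) (2*k+2) (g * hPS^(2*k+3)) = (1 - (3^k - (-1:ℚ)^k)/(4*3^k))/3 := by
      rw [eq_div_iff (by norm_num : (3:ℚ) ≠ 0), mul_comm, e2]
    rw [e3]
    field_simp
    ring

lemma val4 : padicValNat 2 4 = 2 := by
  rw [show (4:ℕ) = 2^2 by norm_num, padicValNat.prime_pow]

lemma valNum_odd (k : ℕ) (hk : Odd k) : padicValNat 2 (3^k + 1) = 2 := by
  obtain ⟨j, rfl⟩ := hk
  have h9 : (9:ℕ)^j % 8 = 1 := by
    rw [Nat.pow_mod]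
    simp
  have h3 : (3:ℕ)^(2*j+1) % 8 = 3 := by
    rw [pow_succ, pow_mul, show (3:ℕ)^2 = 9 by norm_num, Nat.mul_mod, h9]
  obtain ⟨t, ht⟩ : ∃ t, 3^(2*j+1) + 1 = 4*(2*t+1) := ⟨3^(2*j+1)/8, by omega⟩
  rw [ht, padicValNat.mul (by norm_num) (by omega), val4,
    padicValNat.eq_zero_of_not_dvd (by omega)]

lemma valNum_even (k : ℕ) (hk : Even k) (hk1 : k ≠ 0) :
    padicValNat 2 (3^k - 1) = padicValNat 2 k + 2 := by
  have h := padicValNat.pow_two_sub_pow (x := 3) (y := 1) (by norm_num) (by norm_num)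
    (by norm_num) hk1 hk
  simp only [one_pow] at h
  rw [show (3:ℕ)+1 = 4 by norm_num, val4] at h
  have h2 : padicValNat 2 (3-1) = 1 := by norm_num [padicValNat.self]
  rw [h2] at h
  omega

lemma padic_part (k : ℕ) (hk : 1 ≤ k) :
    padicValRat 2 ((3^k - (-1:ℚ)^k)/(4*3^k)) = padicValNat 2 k := by
  have hb : ((4*3^k : ℕ) : ℚ) ≠ 0 := by positivity
  have hvb : padicValNat 2 (4*3^k) = 2 := by
    rw [padicValNat.mul (by norm_num) (by positivity), val4,
      padicValNat.eq_zero_of_not_dvd (by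
        intro h
        exact (Nat.two_dvd_ne_zero.mpr (by simp [Nat.pow_mod])) h)]
  have h3k : (3:ℕ)^1 ≤ 3^k := Nat.pow_le_pow_right (by norm_num) hk
  rcases Nat.even_or_odd k with he | ho
  · have hnum : (3:ℚ)^k - (-1:ℚ)^k = ((3^k - 1 : ℕ) : ℚ) := by
      rw [he.neg_one_pow, Nat.cast_sub (by omega)]
      push_cast
      ring
    have hnz : ((3^k - 1 : ℕ) : ℚ) ≠ 0 := Nat.cast_ne_zero.mpr (by omega)
    rw [hnum, show ((4:ℚ)*3^k) = ((4*3^k : ℕ) : ℚ) by push_cast; ring,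
      padicValRat.div hnz hb,
      padicValRat.of_nat, padicValRat.of_nat, hvb,
      valNum_even k he (by omega)]
    omega
  · have hnum : (3:ℚ)^k - (-1:ℚ)^k = ((3^k + 1 : ℕ) : ℚ) := by
      rw [ho.neg_one_pow]
      push_cast
      ring
    have hnz : ((3^k + 1 : ℕ) : ℚ) ≠ 0 := Nat.cast_ne_zero.mpr (by omega)
    rw [hnum, show ((4:ℚ)*3^k) = ((4*3^k : ℕ) : ℚ) by push_cast; ring,
      padicValRat.div hnz hb,
      padicValRat.of_nat, padicValRat.of_nat, hvb,
      valNum_odd k ho,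
      padicValNat.eq_zero_of_not_dvd (by rw [Nat.two_dvd_ne_zero, ← Nat.odd_iff]; exact ho)]
    omega


theorem stmt18 (k : ℕ) (hk : 1 ≤ k)
    (g : PowerSeries ℚ) (hg : g * (3 + tanhPS ^ 2) = tanhPS ^ 2) :
    PowerSeries.coeff (R := ℚ) (2 * k) (g * hPS ^ (2 * k + 1)) =
        (3 ^ k - (-1 : ℚ) ^ k) / (4 * 3 ^ k) ∧
      padicValRat 2 (PowerSeries.coeff (R := ℚ) (2 * k) (g * hPS ^ (2 * k + 1))) =
        padicValNat 2 k := by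
  have h1 := coeff_main g hg k
  exact ⟨h1, by rw [h1]; exact padic_part k hk⟩
end
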